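/- arXiv:1305.1502 — 2 statements merged into one kernel-verified Lean document; each statement's English description precedes it below -/
import Mathlib

section
/- Let G_d=(V_d,E_d) be a finite simple graph with nonnegative interest scores η and nonnegative social tightness scores τ, let k ≤ |V_d|, and let G be the augmented graph obtained from G_d by adding a new node v̄ with interest score η_v̄ = ε + Σ_{v_i∈V_d}(η_i + Σ_{v_j∈V_d: e_{i,j}∈E_d} τ_{i,j}) for some ε > 0, adding an edge between v̄ and every node of V_d with social tightness score 0 in both directions. Then every (k+1)-node subset of G containing v̄ has strictly larger willingness than every (k+1)-node subset of V_d not containing v̄; consequently, every optimal (k+1)-node connected solution of WASO on G contains v̄. -/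
open Finset

open scoped Classical in
/-- The willingness `W(F) = Σ_{v_i∈F} (η_i + Σ_{v_j∈F, e_{i,j}∈E} τ_{i,j})` of a
subset `F` of nodes of a graph `G` with interest scores `η` and social tightness
scores `τ`. -/
noncomputable def willingness {V : Type*} (G : SimpleGraph V) (η : V → ℝ)
    (τ : V → V → ℝ) (F : Finset V) : ℝ :=
  ∑ i ∈ F, (η i + ∑ j ∈ F.filter (fun j => G.Adj i j), τ i j)

/-- The graph obtained from `G` by adding a new node `v̄` (modeled as `none`)
adjacent to every node of `G` (the nodes `some v`). -/
def augment {V : Type*} (G : SimpleGraph V) : SimpleGraph (Option V) :=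
  SimpleGraph.fromRel (fun a b =>
    a = none ∨ ∃ u v, a = some u ∧ b = some v ∧ G.Adj u v)

/-- Extending the social tightness scores to the augmented graph: score `0` on
both orientations of every new edge. -/
def augTau {V : Type*} (τ : V → V → ℝ) : Option V → Option V → ℝ :=
  fun a b => match a, b with
    | some u, some v => τ u v
    | _, _ => 0


open scoped Classical in
/-- The interest score of the augmented graph: the new node `v̄` gets score
`ε + Σ_{v_i∈V_d}(η_i + Σ_{v_j : e_{i,j}∈E_d} τ_{i,j})`, all other nodes keep
their score. -/
noncomputable def augEta {V : Type*} [Fintype V] (G : SimpleGraph V) (η : V → ℝ)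
    (τ : V → V → ℝ) (ε : ℝ) : Option V → ℝ :=
  fun a => a.elim
    (ε + ∑ i, (η i + ∑ j ∈ Finset.univ.filter (fun j => G.Adj i j), τ i j)) η

theorem augment_some_adj {V : Type*} (G : SimpleGraph V) (u v : V) :
    (augment G).Adj (some u) (some v) ↔ G.Adj u v := by
  simp only [augment, SimpleGraph.fromRel_adj, Option.some.injEq, reduceCtorEq, false_or]
  constructor
  · rintro ⟨hne, (⟨u',v',rfl,rfl,h3⟩|⟨u',v',rfl,rfl,h3⟩)⟩
    · exact h3
    · exact h3.symm
  · intro h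
    exact ⟨by simpa using h.ne, Or.inl ⟨u, v, rfl, rfl, h⟩⟩

theorem augment_none_adj {V : Type*} (G : SimpleGraph V) (v : V) :
    (augment G).Adj none (some v) := by
  simp [augment, SimpleGraph.fromRel_adj]

theorem augTau_none_left {V : Type*} (τ : V → V → ℝ) (j : Option V) :
    augTau τ none j = 0 := by
  cases j <;> rfl

/-- In the augmented graph, every `(k+1)`-node subset containing `v̄` has strictly
larger willingness than every `(k+1)`-node subset not containing `v̄` (i.e. a
subset of `V_d`); consequently, every optimal `(k+1)`-node connected solution of
WASO on the augmented graph contains `v̄`. -/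
theorem stmt1 {V : Type*} [Fintype V] [DecidableEq V] (G : SimpleGraph V)
    (η : V → ℝ) (τ : V → V → ℝ)
    (hη : ∀ v, 0 ≤ η v) (hτ : ∀ u v, G.Adj u v → 0 ≤ τ u v)
    (k : ℕ) (hk : k ≤ Fintype.card V) (ε : ℝ) (hε : 0 < ε) :
    (∀ S T : Finset (Option V), S.card = k + 1 → T.card = k + 1 →
        none ∈ S → none ∉ T →
        willingness (augment G) (augEta G η τ ε) (augTau τ) T <
          willingness (augment G) (augEta G η τ ε) (augTau τ) S) ∧
      ∀ F : Finset (Option V), F.card = k + 1 →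
        ((augment G).induce (↑F : Set (Option V))).Connected →
        (∀ S : Finset (Option V), S.card = k + 1 →
            ((augment G).induce (↑S : Set (Option V))).Connected →
            willingness (augment G) (augEta G η τ ε) (augTau τ) S ≤
              willingness (augment G) (augEta G η τ ε) (augTau τ) F) →
        none ∈ F := by
  classical
  set M : ℝ := ∑ i, (η i + ∑ j ∈ Finset.univ.filter (fun j => G.Adj i j), τ i j) with hM
  -- nonnegativity of each inner augTau term over a filtered set
  have htau' : ∀ (F : Finset (Option V)) (i : Option V) (j : Option V),
      j ∈ F.filter (fun j => (augment G).Adj i j) → 0 ≤ augTau τ i j := by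
    intro F i j hj
    rw [Finset.mem_filter] at hj
    cases i with
    | none => rw [augTau_none_left]
    | some u =>
      cases j with
      | none => exact le_of_eq rfl
      | some v =>
        exact hτ u v ((augment_some_adj G u v).mp hj.2)
  -- upper bound for sets not containing none
  have hT : ∀ T : Finset (Option V), none ∉ T →
      willingness (augment G) (augEta G η τ ε) (augTau τ) T ≤ M := by
    intro T hnT
    have hsub : T ⊆ Finset.univ.image some := by
      intro x hx
      cases x with
      | none => exact absurd hx hnT
      | some v => simp
    have step1 : willingness (augment G) (augEta G η τ ε) (augTau τ) T ≤
        ∑ i ∈ Finset.univ.image some, (augEta G η τ ε i +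
          ∑ j ∈ T.filter (fun j => (augment G).Adj i j), augTau τ i j) := by
      apply Finset.sum_le_sum_of_subset_of_nonneg hsub
      intro i hi _
      have h1 : 0 ≤ augEta G η τ ε i := by
        rcases Finset.mem_image.mp hi with ⟨v, _, rfl⟩
        exact hη v
      exact add_nonneg h1 (Finset.sum_nonneg (htau' T i))
    have step2 : ∑ i ∈ Finset.univ.image some, (augEta G η τ ε i +
          ∑ j ∈ T.filter (fun j => (augment G).Adj i j), augTau τ i j) ≤ M := by
      rw [Finset.sum_image (fun a _ b _ h => Option.some_injective V h)]
      apply Finset.sum_le_sum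
      intro u _
      have hinner : ∑ j ∈ T.filter (fun j => (augment G).Adj (some u) j), augTau τ (some u) j ≤
          ∑ v ∈ Finset.univ.filter (fun v => G.Adj u v), τ u v := by
        have hsub2 : T.filter (fun j => (augment G).Adj (some u) j) ⊆
            (Finset.univ.filter (fun v => G.Adj u v)).image some := by
          intro j hj
          rw [Finset.mem_filter] at hj
          cases j with
          | none => exact absurd hj.1 hnT
          | some v =>
            exact Finset.mem_image.mpr ⟨v, Finset.mem_filter.mpr
              ⟨Finset.mem_univ v, (augment_some_adj G u v).mp hj.2⟩, rfl⟩
        calc ∑ j ∈ T.filter (fun j => (augment G).Adj (some u) j), augTau τ (some u) j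
            ≤ ∑ j ∈ (Finset.univ.filter (fun v => G.Adj u v)).image some, augTau τ (some u) j := by
              apply Finset.sum_le_sum_of_subset_of_nonneg hsub2
              intro j hj _
              rcases Finset.mem_image.mp hj with ⟨v, hv, rfl⟩
              exact hτ u v (Finset.mem_filter.mp hv).2
          _ = ∑ v ∈ Finset.univ.filter (fun v => G.Adj u v), τ u v := by
              rw [Finset.sum_image (fun a _ b _ h => Option.some_injective V h)]
              rfl
      exact add_le_add le_rfl hinner
    exact step1.trans step2
  -- lower bound for sets containing none
  have hS : ∀ S : Finset (Option V), none ∈ S →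
      M + ε ≤ willingness (augment G) (augEta G η τ ε) (augTau τ) S := by
    intro S hnS
    have hnn : ∀ i ∈ S, 0 ≤ augEta G η τ ε i +
        ∑ j ∈ S.filter (fun j => (augment G).Adj i j), augTau τ i j := by
      intro i _
      refine add_nonneg ?_ (Finset.sum_nonneg (htau' S i))
      cases i with
      | none =>
        refine add_nonneg hε.le (Finset.sum_nonneg fun i _ => add_nonneg (hη i)
          (Finset.sum_nonneg fun j hj => hτ i j (Finset.mem_filter.mp hj).2))
      | some v => exact hη v
    have key := Finset.single_le_sum hnn hnS
    have hzero : ∑ j ∈ S.filter (fun j => (augment G).Adj none j), augTau τ none j = 0 :=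
      Finset.sum_eq_zero fun j _ => augTau_none_left τ j
    rw [willingness]
    calc M + ε = augEta G η τ ε none +
        ∑ j ∈ S.filter (fun j => (augment G).Adj none j), augTau τ none j := by
          rw [hzero, add_zero]; simp [augEta]; ring
      _ ≤ _ := key
  have part1 : ∀ S T : Finset (Option V), S.card = k + 1 → T.card = k + 1 →
      none ∈ S → none ∉ T →
      willingness (augment G) (augEta G η τ ε) (augTau τ) T <
        willingness (augment G) (augEta G η τ ε) (augTau τ) S := by
    intro S T _ _ hnS hnT
    calc willingness (augment G) (augEta G η τ ε) (augTau τ) T ≤ M := hT T hnT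
      _ < M + ε := by linarith
      _ ≤ _ := hS S hnS
  refine ⟨part1, ?_⟩
  intro F hF _ hopt
  by_contra hnF
  obtain ⟨V', _, hV'⟩ := Finset.exists_subset_card_eq hk
  set S : Finset (Option V) := insert none (V'.image some) with hSdef
  have hnoneS : (none : Option V) ∈ S := Finset.mem_insert_self _ _
  have hcard : S.card = k + 1 := by
    rw [hSdef, Finset.card_insert_of_notMem (by simp),
      Finset.card_image_of_injective _ (Option.some_injective V), hV']
  have hconn : ((augment G).induce (↑S : Set (Option V))).Connected := by
    constructor
    · intro x y
      have key : ∀ z : ↑(↑S : Set (Option V)),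
          ((augment G).induce (↑S : Set (Option V))).Reachable z ⟨none, hnoneS⟩ := by
        rintro ⟨z, hz⟩
        cases z with
        | none => exact SimpleGraph.Reachable.refl _
        | some v =>
          have : ((augment G).induce (↑S : Set (Option V))).Adj ⟨some v, hz⟩ ⟨none, hnoneS⟩ :=
            (augment_none_adj G v).symm
          exact this.reachable
      exact (key x).trans (key y).symm
  have h1 := hopt S hcard hconn
  have h2 := part1 S F hcard hF hnoneS hnF
  linarith
end

section
/- Let N_b and N_i be positive integers and let reals satisfy c_i < c_b < d_i ≤ d_b with c_b < d_b. Let J_b* be the maximum of N_b i.i.d. random variables uniform on [c_b, d_b] and J_i* the maximum of N_i i.i.d. random variables uniform on [c_i, d_i], with all samples mutually independent. Then P(J_b* ≤ J_i*) = ((d_i − c_b)/(d_b − c_b))^{N_b} · (1 − ((c_b − c_i)/(d_i − c_i))^{N_i} · N_b · Σ_{q=0}^{N_i} C(N_i, q) · ((d_i − c_b)/(c_b − c_i))^q · 1/(N_b + q)). -/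
open MeasureTheory

noncomputable def uniformIcc (c d : ℝ) : Measure ℝ :=
  (ENNReal.ofReal (d - c))⁻¹ • volume.restrict (Set.Icc c d)

lemma vol_inter_Iio (c d t : ℝ) (hcd : c ≤ d) :
    volume (Set.Iio t ∩ Set.Icc c d) = ENNReal.ofReal (min t d - c) := by
  rcases le_or_gt t c with h | h
  · have he : Set.Iio t ∩ Set.Icc c d = ∅ := by
      ext x; simp only [Set.mem_inter_iff, Set.mem_Iio, Set.mem_Icc, Set.mem_empty_iff_false,
        iff_false, not_and, and_imp]
      intro hx hc _; linarith
    rw [he]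
    symm
    rw [measure_empty, ENNReal.ofReal_eq_zero]
    have := min_le_left t d
    linarith
  · rcases le_or_gt t d with h' | h'
    · have he : Set.Iio t ∩ Set.Icc c d = Set.Ico c t := by
        ext x; simp only [Set.mem_inter_iff, Set.mem_Iio, Set.mem_Icc, Set.mem_Ico]
        exact ⟨fun ⟨h1, h2, h3⟩ => ⟨h2, h1⟩, fun ⟨h1, h2⟩ => ⟨h2, h1, by linarith⟩⟩
      rw [he, Real.volume_Ico, min_eq_left h']
    · have he : Set.Iio t ∩ Set.Icc c d = Set.Icc c d := by
        rw [Set.inter_eq_right]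
        intro x hx; simp only [Set.mem_Iio]; exact lt_of_le_of_lt hx.2 h'
      rw [he, Real.volume_Icc, min_eq_right h'.le]

lemma vol_inter_Iic (c d t : ℝ) (hcd : c ≤ d) :
    volume (Set.Iic t ∩ Set.Icc c d) = ENNReal.ofReal (min t d - c) := by
  rcases lt_or_ge t c with h | h
  · have he : Set.Iic t ∩ Set.Icc c d = ∅ := by
      ext x; simp only [Set.mem_inter_iff, Set.mem_Iic, Set.mem_Icc, Set.mem_empty_iff_false,
        iff_false, not_and, and_imp]
      intro hx hc _; linarith
    rw [he]
    symm
    rw [measure_empty, ENNReal.ofReal_eq_zero]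
    have := min_le_left t d
    linarith
  · rcases le_or_gt t d with h' | h'
    · have he : Set.Iic t ∩ Set.Icc c d = Set.Icc c t := by
        ext x; simp only [Set.mem_inter_iff, Set.mem_Iic, Set.mem_Icc]
        exact ⟨fun ⟨h1, h2, h3⟩ => ⟨h2, h1⟩, fun ⟨h1, h2⟩ => ⟨h2, h1, by linarith⟩⟩
      rw [he, Real.volume_Icc, min_eq_left h']
    · have he : Set.Iic t ∩ Set.Icc c d = Set.Icc c d := by
        rw [Set.inter_eq_right]
        intro x hx; simp only [Set.mem_Iic]; exact hx.2.trans h'.le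
      rw [he, Real.volume_Icc, min_eq_right h'.le]

lemma uniformIcc_Iio (c d t : ℝ) (hcd : c < d) :
    uniformIcc c d (Set.Iio t) = ENNReal.ofReal ((min t d - c) / (d - c)) := by
  rw [uniformIcc, Measure.smul_apply, Measure.restrict_apply measurableSet_Iio,
    vol_inter_Iio c d t hcd.le, smul_eq_mul, ENNReal.ofReal_div_of_pos (by linarith),
    div_eq_mul_inv, mul_comm]

lemma uniformIcc_Iic (c d t : ℝ) (hcd : c < d) :
    uniformIcc c d (Set.Iic t) = ENNReal.ofReal ((min t d - c) / (d - c)) := by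
  rw [uniformIcc, Measure.smul_apply, Measure.restrict_apply measurableSet_Iic,
    vol_inter_Iic c d t hcd.le, smul_eq_mul, ENNReal.ofReal_div_of_pos (by linarith),
    div_eq_mul_inv, mul_comm]

lemma uniformIcc_prob (c d : ℝ) (hcd : c < d) : IsProbabilityMeasure (uniformIcc c d) := by
  constructor
  rw [uniformIcc, Measure.smul_apply, Measure.restrict_apply MeasurableSet.univ,
    Set.univ_inter, Real.volume_Icc, smul_eq_mul,
    ENNReal.inv_mul_cancel (by simp; linarith) ENNReal.ofReal_ne_top]

section SupLemmas
variable {n : ℕ}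

lemma set_sup_le (hn : 0 < n) (t : ℝ) :
    {x : Fin n → ℝ | (⨆ j, x j) ≤ t} = Set.pi Set.univ (fun _ => Set.Iic t) := by
  haveI : Nonempty (Fin n) := Fin.pos_iff_nonempty.mp hn
  ext x
  simp only [Set.mem_setOf_eq, Set.mem_pi, Set.mem_univ, Set.mem_Iic, forall_const]
  exact ⟨fun h j => le_trans (le_ciSup (Set.finite_range x).bddAbove j) h, ciSup_le⟩

lemma set_le_sup (hn : 0 < n) (t : ℝ) :
    {y : Fin n → ℝ | t ≤ ⨆ j, y j} = (Set.pi Set.univ (fun _ => Set.Iio t))ᶜ := by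
  haveI : Nonempty (Fin n) := Fin.pos_iff_nonempty.mp hn
  ext y
  simp only [Set.mem_setOf_eq, Set.mem_compl_iff, Set.mem_pi, Set.mem_univ, Set.mem_Iio,
    forall_const, not_forall, not_lt]
  constructor
  · intro h
    obtain ⟨j, hj⟩ := exists_eq_ciSup_of_finite (f := y)
    exact ⟨j, hj ▸ h⟩
  · rintro ⟨j, hj⟩
    exact le_trans hj (le_ciSup (Set.finite_range y).bddAbove j)

lemma measurable_supFun (hn : 0 < n) : Measurable (fun x : Fin n → ℝ => ⨆ j, x j) := by
  apply measurable_of_Iic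
  intro t
  have : (fun x : Fin n → ℝ => ⨆ j, x j) ⁻¹' Set.Iic t
      = Set.pi Set.univ (fun _ => Set.Iic t) := set_sup_le hn t
  rw [this]
  exact MeasurableSet.univ_pi fun _ => measurableSet_Iic

lemma pi_sup_le (μ : Measure ℝ) [SigmaFinite μ] (hn : 0 < n) (t : ℝ) :
    Measure.pi (fun _ : Fin n => μ) {x | (⨆ j, x j) ≤ t} = μ (Set.Iic t) ^ n := by
  rw [set_sup_le hn t, Measure.pi_pi, Finset.prod_const, Finset.card_univ, Fintype.card_fin]

lemma pi_le_sup (μ : Measure ℝ) [IsProbabilityMeasure μ] (hn : 0 < n) (t : ℝ) :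
    Measure.pi (fun _ : Fin n => μ) {y | t ≤ ⨆ j, y j} = 1 - μ (Set.Iio t) ^ n := by
  rw [set_le_sup hn t, prob_compl_eq_one_sub (MeasurableSet.univ_pi fun _ => measurableSet_Iio),
    Measure.pi_pi, Finset.prod_const, Finset.card_univ, Fintype.card_fin]

end SupLemmas

lemma ftc_pow (k : ℕ) (a b c : ℝ) :
    ∫ t in a..b, (t - c) ^ k = ((b - c) ^ (k + 1) - (a - c) ^ (k + 1)) / (k + 1) := by
  rw [intervalIntegral.integral_comp_sub_right (fun u => u ^ k) c, integral_pow]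

section Density
variable (N : ℕ) (c d : ℝ)

noncomputable def dens : ℝ → ℝ := fun t => N * (t - c) ^ (N - 1) / (d - c) ^ N

noncomputable def densE : ℝ → ENNReal :=
  Set.indicator (Set.Icc c d) (fun t => ENNReal.ofReal (dens N c d t))

lemma measurable_densE : Measurable (densE N c d) := by
  apply Measurable.indicator _ measurableSet_Icc
  exact (measurable_id.sub_const c).pow_const (N-1) |>.const_mul _ |>.div_const _ |>.ennreal_ofReal

noncomputable def rho : Measure ℝ := volume.withDensity (densE N c d)

lemma ftc_dens (hN : 0 < N) (hcd : c < d) (m : ℝ) :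
    ∫ t in c..m, dens N c d t = (m - c) ^ N / (d - c) ^ N := by
  have : ∀ t : ℝ, dens N c d t = ((N : ℝ) / (d - c) ^ N) * (t - c) ^ (N - 1) := by
    intro t; rw [dens]; ring
  simp_rw [this]
  rw [intervalIntegral.integral_const_mul, ftc_pow, Nat.sub_add_cancel hN, sub_self,
    zero_pow hN.ne', sub_zero, Nat.cast_pred hN, sub_add_cancel]
  have hNne : (N : ℝ) ≠ 0 := Nat.cast_ne_zero.mpr hN.ne'
  rw [div_mul_div_comm, mul_comm (N : ℝ) _, mul_div_mul_right _ _ hNne]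

lemma rho_Iic (hN : 0 < N) (hcd : c < d) (s : ℝ) :
    rho N c d (Set.Iic s) = (ENNReal.ofReal ((min s d - c) / (d - c))) ^ N := by
  rw [rho, withDensity_apply _ measurableSet_Iic, densE,
    lintegral_indicator measurableSet_Icc, Measure.restrict_restrict measurableSet_Icc]
  rcases le_or_gt s c with h | h
  · have hsub : Set.Icc c d ∩ Set.Iic s ⊆ Set.Icc c s := fun x hx => ⟨hx.1.1, hx.2⟩
    have h0 : volume (Set.Icc c s) = 0 := by
      rw [Real.volume_Icc]; exact ENNReal.ofReal_eq_zero.mpr (by linarith)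
    rw [Measure.restrict_eq_zero.mpr (measure_mono_null hsub h0), lintegral_zero_measure]
    have hmin : min s d = s := min_eq_left (h.trans hcd.le)
    rw [hmin]
    have : ENNReal.ofReal ((s - c) / (d - c)) = 0 := by
      rw [ENNReal.ofReal_eq_zero]
      apply div_nonpos_of_nonpos_of_nonneg <;> linarith
    rw [this, zero_pow hN.ne']
  · have hset : Set.Icc c d ∩ Set.Iic s = Set.Icc c (min s d) := by
      ext x
      simp only [Set.mem_inter_iff, Set.mem_Icc, Set.mem_Iic, le_min_iff]
      constructor
      · rintro ⟨⟨h1, h2⟩, h3⟩; exact ⟨h1, h3, h2⟩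
      · rintro ⟨h1, h2, h3⟩; exact ⟨⟨h1, h3⟩, h2⟩
    rw [hset]
    have hcm : c ≤ min s d := le_min h.le hcd.le
    have hint : IntegrableOn (dens N c d) (Set.Icc c (min s d)) volume := by
      apply Continuous.integrableOn_Icc
      exact (continuous_const.mul ((continuous_id.sub continuous_const).pow _)).div_const _
    have hnn : 0 ≤ᵐ[volume.restrict (Set.Icc c (min s d))] dens N c d := by
      filter_upwards [ae_restrict_mem measurableSet_Icc] with t ht
      apply div_nonneg
      · exact mul_nonneg (Nat.cast_nonneg N) (pow_nonneg (by linarith [ht.1]) _)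
      · exact pow_nonneg (by linarith) _
    rw [← ofReal_integral_eq_lintegral_ofReal hint hnn,
      MeasureTheory.integral_Icc_eq_integral_Ioc,
      ← intervalIntegral.integral_of_le hcm, ftc_dens N c d hN hcd]
    have hx : 0 ≤ (min s d - c) / (d - c) := by
      apply div_nonneg _ (by linarith)
      have := le_min h.le hcd.le
      linarith
    rw [← ENNReal.ofReal_pow hx, div_pow]
end Density

lemma map_sup_eq_rho (N : ℕ) (hN : 0 < N) (c d : ℝ) (hcd : c < d) :
    (Measure.pi fun _ : Fin N => uniformIcc c d).map (fun x => ⨆ j, x j) = rho N c d := by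
  haveI := uniformIcc_prob c d hcd
  haveI : IsProbabilityMeasure
      ((Measure.pi fun _ : Fin N => uniformIcc c d).map (fun x => ⨆ j, x j)) :=
    Measure.isProbabilityMeasure_map (measurable_supFun hN).aemeasurable
  refine Measure.ext_of_Iic _ _ (fun s => ?_)
  rw [Measure.map_apply (measurable_supFun hN) measurableSet_Iic, rho_Iic N c d hN hcd]
  have hpre : (fun x : Fin N → ℝ => ⨆ j, x j) ⁻¹' Set.Iic s = {x | (⨆ j, x j) ≤ s} := rfl
  rw [hpre, pi_sup_le _ hN, uniformIcc_Iic c d s hcd]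

section Main

variable (Nb Ni : ℕ) (ci di cb db : ℝ)

/-- ENNReal tail CDF power of the i-side. -/
noncomputable def GE : ℝ → ENNReal := fun t =>
  (ENNReal.ofReal ((min t di - ci) / (di - ci))) ^ Ni

/-- real integrand. -/
noncomputable def hfun : ℝ → ℝ := Set.indicator (Set.Icc cb db)
  (fun t => dens Nb cb db t * ((min t di - ci) / (di - ci)) ^ Ni)

lemma GE_meas : Measurable (GE Ni ci di) :=
  ((((measurable_id.min measurable_const).sub_const ci).div_const _).ennreal_ofReal).pow_const Ni

lemma GE_le_one (hcidi : ci < di) : ∀ t, GE Ni ci di t ≤ 1 := by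
  intro t
  apply pow_le_one'
  rw [ENNReal.ofReal_le_one]
  apply div_le_one_of_le₀ _ (by linarith)
  have := min_le_right t di
  linarith

lemma hfun_nonneg (hcicb : ci < cb) (hcbdi : cb < di) (hcbdb : cb < db) :
    ∀ t, 0 ≤ hfun Nb Ni ci di cb db t := by
  intro t
  rw [hfun]
  apply Set.indicator_nonneg
  intro t ht
  apply mul_nonneg
  · apply div_nonneg
    · exact mul_nonneg (Nat.cast_nonneg Nb) (pow_nonneg (by linarith [ht.1]) _)
    · exact pow_nonneg (by linarith) _
  · apply pow_nonneg
    apply div_nonneg _ (by linarith)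
    rcases le_total t di with h' | h'
    · rw [min_eq_left h']; have := ht.1; linarith
    · rw [min_eq_right h']; linarith

lemma I_eq_ofReal (hNb : 0 < Nb) (hcicb : ci < cb) (hcbdi : cb < di) (hcbdb : cb < db) :
    ∫⁻ x, GE Ni ci di (⨆ j, x j) ∂(Measure.pi fun _ : Fin Nb => uniformIcc cb db)
      = ENNReal.ofReal (∫ t, hfun Nb Ni ci di cb db t) := by
  rw [← lintegral_map (GE_meas Ni ci di) (measurable_supFun hNb),
    map_sup_eq_rho Nb hNb cb db hcbdb, rho,
    lintegral_withDensity_eq_lintegral_mul volume (measurable_densE Nb cb db)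
      (GE_meas Ni ci di)]
  have hpt : ∀ t, (densE Nb cb db * GE Ni ci di) t = ENNReal.ofReal (hfun Nb Ni ci di cb db t) := by
    intro t
    by_cases ht : t ∈ Set.Icc cb db
    · rw [Pi.mul_apply, hfun, Set.indicator_of_mem ht, densE, Set.indicator_of_mem ht, GE]
      have h1 : 0 ≤ (min t di - ci) / (di - ci) := by
        apply div_nonneg _ (by linarith)
        rcases le_total t di with h' | h'
        · rw [min_eq_left h']; have := ht.1; linarith
        · rw [min_eq_right h']; linarith
      have h2 : 0 ≤ dens Nb cb db t := by
        apply div_nonneg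
        · exact mul_nonneg (Nat.cast_nonneg Nb) (pow_nonneg (by linarith [ht.1]) _)
        · exact pow_nonneg (by linarith) _
      rw [← ENNReal.ofReal_pow h1, ← ENNReal.ofReal_mul h2]
    · rw [Pi.mul_apply, hfun, Set.indicator_of_notMem ht, densE,
        Set.indicator_of_notMem ht, zero_mul, ENNReal.ofReal_zero]
  rw [lintegral_congr hpt]
  have hcont : Continuous fun t => dens Nb cb db t * ((min t di - ci) / (di - ci)) ^ Ni := by
    apply Continuous.mul
    · exact (continuous_const.mul ((continuous_id.sub continuous_const).pow _)).div_const _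
    · exact (((continuous_id.min continuous_const).sub continuous_const).div_const _).pow _
  have hint : Integrable (hfun Nb Ni ci di cb db) volume := by
    rw [hfun]
    exact (hcont.integrableOn_Icc).integrable_indicator measurableSet_Icc
  rw [← ofReal_integral_eq_lintegral_ofReal hint
    (ae_of_all _ (hfun_nonneg Nb Ni ci di cb db hcicb hcbdi hcbdb))]

lemma integral_hfun (hNb : 0 < Nb) (hcicb : ci < cb) (hcbdi : cb < di) (hdidb : di ≤ db) :
    ∫ t, hfun Nb Ni ci di cb db t
      = ((di - cb) / (db - cb)) ^ Nb *
          (((cb - ci) / (di - ci)) ^ Ni * Nb *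
            ∑ q ∈ Finset.range (Ni + 1),
              (Ni.choose q : ℝ) * ((di - cb) / (cb - ci)) ^ q * (1 / ((Nb : ℝ) + q)))
        + (1 - (di - cb) ^ Nb / (db - cb) ^ Nb) := by
  have hcbdb : cb < db := hcbdi.trans_le hdidb
  have hcidi : ci < di := hcicb.trans hcbdi
  have hcont : Continuous fun t => dens Nb cb db t * ((min t di - ci) / (di - ci)) ^ Ni := by
    apply Continuous.mul
    · exact (continuous_const.mul ((continuous_id.sub continuous_const).pow _)).div_const _
    · exact (((continuous_id.min continuous_const).sub continuous_const).div_const _).pow _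
  rw [hfun, integral_indicator measurableSet_Icc, MeasureTheory.integral_Icc_eq_integral_Ioc,
    ← intervalIntegral.integral_of_le hcbdb.le,
    ← intervalIntegral.integral_add_adjacent_intervals
      (a := cb) (b := di) (c := db) (hcont.intervalIntegrable _ _) (hcont.intervalIntegrable _ _)]
  have hA : (∫ t in cb..di, dens Nb cb db t * ((min t di - ci) / (di - ci)) ^ Ni)
      = ((di - cb) / (db - cb)) ^ Nb *
          (((cb - ci) / (di - ci)) ^ Ni * Nb *
            ∑ q ∈ Finset.range (Ni + 1),
              (Ni.choose q : ℝ) * ((di - cb) / (cb - ci)) ^ q * (1 / ((Nb : ℝ) + q))) := by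
    rw [intervalIntegral.integral_congr (g := fun t =>
        ∑ q ∈ Finset.range (Ni + 1),
          ((Nb : ℝ) * (Ni.choose q : ℝ) * (cb - ci) ^ (Ni - q)
            / ((db - cb) ^ Nb * (di - ci) ^ Ni)) * (t - cb) ^ (Nb - 1 + q))
      (by
        intro t ht
        rw [Set.uIcc_of_le hcbdi.le] at ht
        dsimp only
        rw [min_eq_left ht.2, dens, div_pow]
        have hsplit : t - ci = (t - cb) + (cb - ci) := by ring
        rw [hsplit, add_pow, Finset.sum_div, Finset.mul_sum]
        apply Finset.sum_congr rfl
        intro q hq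
        rw [pow_add]
        ring)]
    rw [intervalIntegral.integral_finset_sum (f := fun q (t : ℝ) => (Nb : ℝ) * (Ni.choose q : ℝ) * (cb - ci) ^ (Ni - q)
            / ((db - cb) ^ Nb * (di - ci) ^ Ni) * (t - cb) ^ (Nb - 1 + q)) (fun q hq =>
      ((continuous_const.mul ((continuous_sub_right cb).pow _)).intervalIntegrable _ _ :
        IntervalIntegrable (fun t : ℝ => (Nb : ℝ) * (Ni.choose q : ℝ) * (cb - ci) ^ (Ni - q)
          / ((db - cb) ^ Nb * (di - ci) ^ Ni) * (t - cb) ^ (Nb - 1 + q)) volume cb di))]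
    have hterm : ∀ q ∈ Finset.range (Ni + 1),
        (∫ t in cb..di, ((Nb : ℝ) * (Ni.choose q : ℝ) * (cb - ci) ^ (Ni - q)
            / ((db - cb) ^ Nb * (di - ci) ^ Ni)) * (t - cb) ^ (Nb - 1 + q))
        = ((di - cb) / (db - cb)) ^ Nb * (((cb - ci) / (di - ci)) ^ Ni * Nb *
            ((Ni.choose q : ℝ) * ((di - cb) / (cb - ci)) ^ q * (1 / ((Nb : ℝ) + q)))) := by
      intro q hq
      have hq' : q ≤ Ni := Finset.mem_range_succ_iff.mp hq
      rw [intervalIntegral.integral_const_mul, ftc_pow]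
      have hc1 : ((Nb - 1 + q : ℕ) : ℝ) + 1 = (Nb : ℝ) + q := by
        rw [Nat.cast_add, Nat.cast_sub hNb]
        push_cast
        ring
      have hc2 : (Nb - 1 + q) + 1 = Nb + q := by omega
      rw [hc1, hc2, sub_self, zero_pow (by omega), sub_zero]
      have e1 : (cb - ci) ^ (Ni - q) * (cb - ci) ^ q = (cb - ci) ^ Ni := by
        rw [← pow_add, Nat.sub_add_cancel hq']
      have e2 : (di - cb) ^ (Nb + q) = (di - cb) ^ Nb * (di - cb) ^ q := pow_add _ _ _
      have h1 : (cb - ci) ≠ 0 := by linarith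
      have h2 : (di - ci) ≠ 0 := by linarith
      have h3 : (db - cb) ≠ 0 := by linarith
      have h4 : ((Nb : ℝ) + q) ≠ 0 := by positivity
      rw [div_pow, div_pow, div_pow, e2, ← e1]
      field_simp
    rw [Finset.sum_congr rfl hterm, ← Finset.mul_sum, ← Finset.mul_sum]
  have hB : (∫ t in di..db, dens Nb cb db t * ((min t di - ci) / (di - ci)) ^ Ni)
      = 1 - (di - cb) ^ Nb / (db - cb) ^ Nb := by
    rw [intervalIntegral.integral_congr (g := dens Nb cb db)
      (by
        intro t ht
        rw [Set.uIcc_of_le hdidb] at ht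
        dsimp only
        rw [min_eq_right ht.1, div_self (by linarith : di - ci ≠ 0), one_pow, mul_one])]
    have hcontd : Continuous (dens Nb cb db) :=
      (continuous_const.mul ((continuous_id.sub continuous_const).pow _)).div_const _
    rw [← intervalIntegral.integral_interval_sub_left
      (hcontd.intervalIntegrable cb db) (hcontd.intervalIntegrable cb di),
      ftc_dens Nb cb db hNb hcbdb, ftc_dens Nb cb db hNb hcbdb,
      div_self (pow_ne_zero _ (by linarith : db - cb ≠ 0))]
  rw [hA, hB]

end Main

/-- Exact formula for the probability that the maximum `J_i*` of `N_i` i.i.d.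
uniform samples on `[c_i, d_i]` exceeds the maximum `J_b*` of `N_b` i.i.d.
uniform samples on `[c_b, d_b]`, when `c_i < c_b < d_i ≤ d_b`. -/
theorem stmt5 (Nb Ni : ℕ) (hNb : 0 < Nb) (hNi : 0 < Ni)
    (ci di cb db : ℝ) (hcicb : ci < cb) (hcbdi : cb < di) (hdidb : di ≤ db)
    (hcbdb : cb < db) :
    (((Measure.pi fun _ : Fin Nb => uniformIcc cb db).prod
        (Measure.pi fun _ : Fin Ni => uniformIcc ci di))
      {ω : (Fin Nb → ℝ) × (Fin Ni → ℝ) | (⨆ j, ω.1 j) ≤ ⨆ j, ω.2 j}).toReal =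
      ((di - cb) / (db - cb)) ^ Nb *
        (1 - ((cb - ci) / (di - ci)) ^ Ni * Nb *
          ∑ q ∈ Finset.range (Ni + 1),
            (Ni.choose q : ℝ) * ((di - cb) / (cb - ci)) ^ q *
              (1 / ((Nb : ℝ) + q))) := by
  have hcidi : ci < di := hcicb.trans hcbdi
  haveI := uniformIcc_prob cb db hcbdb
  haveI := uniformIcc_prob ci di hcidi
  have hS : MeasurableSet {ω : (Fin Nb → ℝ) × (Fin Ni → ℝ) | (⨆ j, ω.1 j) ≤ ⨆ j, ω.2 j} :=
    measurableSet_le ((measurable_supFun hNb).comp measurable_fst)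
      ((measurable_supFun hNi).comp measurable_snd)
  have step2 : ((Measure.pi fun _ : Fin Nb => uniformIcc cb db).prod
        (Measure.pi fun _ : Fin Ni => uniformIcc ci di))
        {ω : (Fin Nb → ℝ) × (Fin Ni → ℝ) | (⨆ j, ω.1 j) ≤ ⨆ j, ω.2 j}
      = ∫⁻ x, (1 - GE Ni ci di (⨆ j, x j))
          ∂(Measure.pi fun _ : Fin Nb => uniformIcc cb db) := by
    rw [Measure.prod_apply hS]
    apply lintegral_congr
    intro x
    have hpre : (Prod.mk x ⁻¹' {ω : (Fin Nb → ℝ) × (Fin Ni → ℝ) | (⨆ j, ω.1 j) ≤ ⨆ j, ω.2 j})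
        = {y : Fin Ni → ℝ | (⨆ j, x j) ≤ ⨆ j, y j} := rfl
    rw [hpre, pi_le_sup _ hNi, uniformIcc_Iio ci di _ hcidi, GE]
  have hIle : ∫⁻ x, GE Ni ci di (⨆ j, x j)
      ∂(Measure.pi fun _ : Fin Nb => uniformIcc cb db) ≤ 1 := by
    calc ∫⁻ x, GE Ni ci di (⨆ j, x j) ∂(Measure.pi fun _ : Fin Nb => uniformIcc cb db)
        ≤ ∫⁻ _, 1 ∂(Measure.pi fun _ : Fin Nb => uniformIcc cb db) :=
          lintegral_mono fun x => GE_le_one Ni ci di hcidi _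
    _ = 1 := by rw [lintegral_one, measure_univ]
  have step4 : ∫⁻ x, (1 - GE Ni ci di (⨆ j, x j))
        ∂(Measure.pi fun _ : Fin Nb => uniformIcc cb db)
      = 1 - ∫⁻ x, GE Ni ci di (⨆ j, x j)
          ∂(Measure.pi fun _ : Fin Nb => uniformIcc cb db) := by
    have h := lintegral_sub (μ := Measure.pi fun _ : Fin Nb => uniformIcc cb db)
      (f := fun _ => (1 : ENNReal)) (g := fun x : Fin Nb → ℝ => GE Ni ci di (⨆ j, x j))
      ((GE_meas Ni ci di).comp (measurable_supFun hNb))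
      (lt_of_le_of_lt hIle ENNReal.one_lt_top).ne
      (ae_of_all _ fun x => GE_le_one Ni ci di hcidi _)
    rw [lintegral_one, measure_univ] at h
    exact h
  rw [step2, step4, I_eq_ofReal Nb Ni ci di cb db hNb hcicb hcbdi hcbdb] at *
  rw [ENNReal.toReal_sub_of_le hIle ENNReal.one_ne_top, ENNReal.toReal_one,
    ENNReal.toReal_ofReal
      (integral_nonneg (hfun_nonneg Nb Ni ci di cb db hcicb hcbdi hcbdb)),
    integral_hfun Nb Ni ci di cb db hNb hcicb hcbdi hdidb, div_pow]
  ring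
end
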